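/- Discrete pointwise bounds for the tumor variable (u-component of Theorem 'Pointwise bounds'): suppose u^m_K ∈ [0,1] for every cell K and u : 𝒦 → ℝ solves the discrete u-equation of the upwind DG scheme for some data μ, ν, n : 𝒦 → ℝ. Then u_K ∈ [0,1] for every cell K. -/

import Mathlib

/-- The degenerate mobility `M(v) = K ⬝ (v)₊^p ⬝ (1-v)₊^q`. -/
noncomputable def M (Km : ℝ) (p q : ℕ) (v : ℝ) : ℝ :=
  Km * max v 0 ^ p * max (1 - v) 0 ^ q

/-- The point `v* = p/(p+q)` where the maximum of `M` is attained. -/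
noncomputable def vstar (p q : ℕ) : ℝ := (p:ℝ) / ((p:ℝ) + (q:ℝ))

/-- Increasing part of the mobility. -/
noncomputable def Mup (Km : ℝ) (p q : ℕ) (v : ℝ) : ℝ :=
  if v ≤ vstar p q then M Km p q v else M Km p q (vstar p q)

/-- Decreasing part of the mobility. -/
noncomputable def Mdown (Km : ℝ) (p q : ℕ) (v : ℝ) : ℝ :=
  if v ≤ vstar p q then 0 else M Km p q v - M Km p q (vstar p q)

/-- The upwind edge flux `Φ_{K,L}(μ, v)` between adjacent cells `K` and `L`. -/
noncomputable def Phi (Km : ℝ) (p q : ℕ) {𝒦 : Type*} (μ v : 𝒦 → ℝ) (a b : 𝒦) : ℝ :=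
  max (μ a - μ b) 0 * max (Mup Km p q (v a) + Mdown Km p q (v b)) 0
    - max (-(μ a - μ b)) 0 * max (Mup Km p q (v b) + Mdown Km p q (v a)) 0

/-- The proliferation function `P(u, n) = K_P ⬝ (u)₊^r ⬝ (1-u)₊^s ⬝ (n)₊`. -/
noncomputable def prolif (KP : ℝ) (r s : ℕ) (u n : ℝ) : ℝ :=
  KP * max u 0 ^ r * max (1 - u) 0 ^ s * max n 0

lemma vstar_pos (p q : ℕ) (hp : 1 ≤ p) (hq : 1 ≤ q) : 0 < vstar p q := by
  have h1 : (1:ℝ) ≤ p := by exact_mod_cast hp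
  have h2 : (1:ℝ) ≤ q := by exact_mod_cast hq
  exact div_pos (by linarith) (by linarith)

lemma vstar_lt_one (p q : ℕ) (hp : 1 ≤ p) (hq : 1 ≤ q) : vstar p q < 1 := by
  have h1 : (1:ℝ) ≤ p := by exact_mod_cast hp
  have h2 : (1:ℝ) ≤ q := by exact_mod_cast hq
  rw [vstar, div_lt_one (by linarith)]; linarith

lemma key_amgm (p q : ℕ) (hp : 1 ≤ p) (hq : 1 ≤ q) (x : ℝ) (hx0 : 0 ≤ x) (hx1 : x ≤ 1) :
    x ^ p * (1 - x) ^ q ≤ vstar p q ^ p * (1 - vstar p q) ^ q := by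
  have ha0 : 0 < vstar p q := vstar_pos p q hp hq
  have ha1 : vstar p q < 1 := vstar_lt_one p q hp hq
  set a := vstar p q with ha
  have h1 : (1:ℝ) ≤ p := by exact_mod_cast hp
  have h2 : (1:ℝ) ≤ q := by exact_mod_cast hq
  have hpq : (0:ℝ) < (p:ℝ) + q := by linarith
  have hd1 : 0 ≤ x / a := div_nonneg hx0 ha0.le
  have hd2 : 0 ≤ (1 - x) / (1 - a) := div_nonneg (by linarith) (by linarith)
  have h := Real.geom_mean_le_arith_mean2_weighted ha0.le (by linarith : (0:ℝ) ≤ 1 - a)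
    hd1 hd2 (by ring)
  have ha' : a ≠ 0 := ne_of_gt ha0
  have h1a : (1:ℝ) - a ≠ 0 := ne_of_gt (by linarith)
  have hr : a * (x / a) + (1 - a) * ((1 - x) / (1 - a)) = 1 := by
    field_simp; ring
  rw [hr] at h
  have h2' : ((x / a) ^ a * ((1 - x) / (1 - a)) ^ (1 - a)) ^ ((p:ℝ) + q) ≤ 1 := by
    have := Real.rpow_le_one (by positivity) h hpq.le
    simpa using this
  have ea : a * ((p:ℝ) + q) = (p:ℝ) := by
    rw [ha, vstar]; field_simp
  have eb : (1 - a) * ((p:ℝ) + q) = (q:ℝ) := by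
    have : (1:ℝ) - vstar p q = (q:ℝ) / ((p:ℝ) + q) := by
      rw [vstar]; field_simp; ring
    rw [ha, this]; field_simp
  rw [Real.mul_rpow (Real.rpow_nonneg hd1 _) (Real.rpow_nonneg hd2 _), ← Real.rpow_mul hd1,
    ← Real.rpow_mul hd2, ea, eb, Real.rpow_natCast, Real.rpow_natCast] at h2'
  have hexp : (x / a) ^ p * ((1 - x) / (1 - a)) ^ q * (a ^ p * (1 - a) ^ q)
      = x ^ p * (1 - x) ^ q := by
    rw [div_pow, div_pow]
    field_simp
  have hmul := mul_le_mul_of_nonneg_right h2'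
    (mul_nonneg (pow_nonneg ha0.le p) (pow_nonneg (show (0:ℝ) ≤ 1 - a by linarith) q))
  rw [one_mul, hexp] at hmul
  exact hmul

lemma M_nonneg (Km : ℝ) (hKm : 0 ≤ Km) (p q : ℕ) (v : ℝ) : 0 ≤ M Km p q v := by
  unfold M; positivity

lemma M_le_M_vstar (Km : ℝ) (hKm : 0 ≤ Km) (p q : ℕ) (hp : 1 ≤ p) (hq : 1 ≤ q) (v : ℝ) :
    M Km p q v ≤ M Km p q (vstar p q) := by
  have ha0 : 0 < vstar p q := vstar_pos p q hp hq
  have ha1 : vstar p q < 1 := vstar_lt_one p q hp hq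
  unfold M
  rw [max_eq_left ha0.le, max_eq_left (by linarith : (0:ℝ) ≤ 1 - vstar p q)]
  rcases le_or_gt v 0 with hv | hv
  · rw [max_eq_right hv, zero_pow (by omega : p ≠ 0), mul_zero, zero_mul]
    exact mul_nonneg (mul_nonneg hKm (pow_nonneg ha0.le _)) (pow_nonneg (by linarith) _)
  rcases le_or_gt 1 v with hv1 | hv1
  · rw [max_eq_right (by linarith : 1 - v ≤ 0), zero_pow (by omega : q ≠ 0), mul_zero]
    exact mul_nonneg (mul_nonneg hKm (pow_nonneg ha0.le _)) (pow_nonneg (by linarith) _)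
  · rw [max_eq_left hv.le, max_eq_left (by linarith : (0:ℝ) ≤ 1 - v)]
    have := key_amgm p q hp hq v hv.le hv1.le
    calc Km * v ^ p * (1 - v) ^ q = Km * (v ^ p * (1 - v) ^ q) := by ring
      _ ≤ Km * (vstar p q ^ p * (1 - vstar p q) ^ q) := by
          exact mul_le_mul_of_nonneg_left this hKm
      _ = Km * vstar p q ^ p * (1 - vstar p q) ^ q := by ring

lemma Mup_nonneg (Km : ℝ) (hKm : 0 ≤ Km) (p q : ℕ) (v : ℝ) : 0 ≤ Mup Km p q v := by
  unfold Mup; split <;> exact M_nonneg Km hKm p q _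

lemma Mup_le (Km : ℝ) (hKm : 0 ≤ Km) (p q : ℕ) (hp : 1 ≤ p) (hq : 1 ≤ q) (v : ℝ) :
    Mup Km p q v ≤ M Km p q (vstar p q) := by
  unfold Mup; split
  · exact M_le_M_vstar Km hKm p q hp hq v
  · exact le_refl _

lemma Mdown_nonpos (Km : ℝ) (hKm : 0 ≤ Km) (p q : ℕ) (hp : 1 ≤ p) (hq : 1 ≤ q) (v : ℝ) :
    Mdown Km p q v ≤ 0 := by
  unfold Mdown; split
  · exact le_refl _
  · linarith [M_le_M_vstar Km hKm p q hp hq v]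

lemma M_eq_zero_of_neg (Km : ℝ) (p q : ℕ) (hp : 1 ≤ p) (v : ℝ) (hv : v ≤ 0) :
    M Km p q v = 0 := by
  unfold M; rw [max_eq_right hv, zero_pow (by omega : p ≠ 0), mul_zero, zero_mul]

lemma M_eq_zero_of_gt_one (Km : ℝ) (p q : ℕ) (hq : 1 ≤ q) (v : ℝ) (hv : 1 ≤ v) :
    M Km p q v = 0 := by
  unfold M
  rw [max_eq_right (by linarith : 1 - v ≤ 0), zero_pow (by omega : q ≠ 0), mul_zero]

lemma Phi_nonpos_of_neg (Km : ℝ) (hKm : 0 ≤ Km) (p q : ℕ) (hp : 1 ≤ p) (hq : 1 ≤ q)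
    {𝒦 : Type*} (μ v : 𝒦 → ℝ) (a b : 𝒦) (ha : v a < 0) :
    Phi Km p q μ v a b ≤ 0 := by
  have hva : v a ≤ vstar p q := le_of_lt (lt_of_lt_of_le ha (vstar_pos p q hp hq).le)
  have hMup : Mup Km p q (v a) = 0 := by
    rw [Mup, if_pos hva, M_eq_zero_of_neg Km p q hp (v a) ha.le]
  have hMdown : Mdown Km p q (v a) = 0 := by rw [Mdown, if_pos hva]
  have h1 : max (Mup Km p q (v a) + Mdown Km p q (v b)) 0 = 0 := by
    rw [hMup, zero_add]
    exact max_eq_right (Mdown_nonpos Km hKm p q hp hq (v b))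
  rw [Phi, h1, mul_zero, zero_sub, neg_nonpos]
  exact mul_nonneg (le_max_right _ _) (le_max_right _ _)

lemma Phi_nonneg_of_gt_one (Km : ℝ) (hKm : 0 ≤ Km) (p q : ℕ) (hp : 1 ≤ p) (hq : 1 ≤ q)
    {𝒦 : Type*} (μ v : 𝒦 → ℝ) (a b : 𝒦) (ha : 1 < v a) :
    0 ≤ Phi Km p q μ v a b := by
  have hva : ¬ v a ≤ vstar p q := by
    have := vstar_lt_one p q hp hq; push_neg; linarith
  have hMdown : Mdown Km p q (v a) = - M Km p q (vstar p q) := by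
    rw [Mdown, if_neg hva, M_eq_zero_of_gt_one Km p q hq (v a) ha.le, zero_sub]
  have h2 : max (Mup Km p q (v b) + Mdown Km p q (v a)) 0 = 0 := by
    rw [hMdown]
    exact max_eq_right (by linarith [Mup_le Km hKm p q hp hq (v b)])
  rw [Phi, h2, mul_zero, sub_zero]
  exact mul_nonneg (le_max_right _ _) (le_max_right _ _)

lemma prolif_zero_of_neg (KP : ℝ) (r s : ℕ) (hr : 1 ≤ r) (u n : ℝ) (hu : u < 0) :
    prolif KP r s u n = 0 := by
  rw [prolif, max_eq_right hu.le, zero_pow (by omega : r ≠ 0), mul_zero, zero_mul, zero_mul]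

lemma prolif_zero_of_gt_one (KP : ℝ) (r s : ℕ) (hs : 1 ≤ s) (u n : ℝ) (hu : 1 < u) :
    prolif KP r s u n = 0 := by
  rw [prolif, max_eq_right (by linarith : 1 - u ≤ 0), zero_pow (by omega : s ≠ 0), mul_zero,
    zero_mul]

/-- Discrete pointwise bounds for the tumor variable: any solution of the
discrete `u`-equation of the upwind DG scheme stays in `[0,1]`. -/
theorem discrete_pointwise_bounds_u (Km : ℝ) (hKm : 0 < Km)
    (p q : ℕ) (hp : 1 ≤ p) (hq : 1 ≤ q)
    (KP : ℝ) (hKP : 0 < KP) (r s : ℕ) (hr : 1 ≤ r) (hs : 1 ≤ s)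
    {𝒦 : Type*} [Fintype 𝒦]
    (m : 𝒦 → ℝ) (hm : ∀ K, 0 < m K)
    (adj : 𝒦 → 𝒦 → Prop) [DecidableRel adj]
    (hadj_symm : ∀ K L, adj K L → adj L K) (hadj_irrefl : ∀ K, ¬ adj K K)
    (w : 𝒦 → 𝒦 → ℝ) (hw_symm : ∀ K L, w K L = w L K)
    (hw_pos : ∀ K L, adj K L → 0 < w K L)
    (Δt : ℝ) (hΔt : 0 < Δt) (Cu : ℝ) (hCu : 0 < Cu)
    (δ : ℝ) (hδ : 0 ≤ δ) (P₀ : ℝ) (hP₀ : 0 ≤ P₀)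
    (um : 𝒦 → ℝ) (hum : ∀ K, um K ∈ Set.Icc (0:ℝ) 1)
    (μ ν n u : 𝒦 → ℝ)
    (hu : ∀ K, m K * (u K - um K) / Δt =
      - Cu * (∑ L, if adj K L then w K L * Phi Km p q μ u K L else 0)
      + δ * P₀ * m K * prolif KP r s (u K) (n K) * max (ν K - μ K) 0) :
    ∀ K, u K ∈ Set.Icc (0:ℝ) 1 := by
  intro K
  refine Set.mem_Icc.mpr ⟨?_, ?_⟩
  · by_contra hc
    push_neg at hc
    have hkey := hu K
    rw [prolif_zero_of_neg KP r s hr _ _ hc] at hkey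
    have hS : (∑ L, if adj K L then w K L * Phi Km p q μ u K L else 0) ≤ 0 := by
      apply Finset.sum_nonpos
      intro L _
      split
      · next hadj =>
          exact mul_nonpos_iff.mpr (Or.inl ⟨(hw_pos K L hadj).le,
            Phi_nonpos_of_neg Km hKm.le p q hp hq μ u K L hc⟩)
      · exact le_refl 0
    have h0 : 0 ≤ m K * (u K - um K) / Δt := by
      rw [hkey]
      simp only [mul_zero, zero_mul, add_zero]
      nlinarith [hS, hCu]
    rw [le_div_iff₀ hΔt, zero_mul] at h0
    have hm' := hm K
    have hum' := (hum K).1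
    nlinarith [h0, hm', hum', hc]
  · by_contra hc
    push_neg at hc
    have hkey := hu K
    rw [prolif_zero_of_gt_one KP r s hs _ _ hc] at hkey
    have hS : 0 ≤ (∑ L, if adj K L then w K L * Phi Km p q μ u K L else 0) := by
      apply Finset.sum_nonneg
      intro L _
      split
      · next hadj =>
          exact mul_nonneg (hw_pos K L hadj).le
            (Phi_nonneg_of_gt_one Km hKm.le p q hp hq μ u K L hc)
      · exact le_refl 0
    have h0 : m K * (u K - um K) / Δt ≤ 0 := by
      rw [hkey]
      simp only [mul_zero, zero_mul, add_zero]
      nlinarith [hS, hCu]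
    rw [div_le_iff₀ hΔt, zero_mul] at h0
    have hm' := hm K
    have hum' := (hum K).2
    nlinarith [h0, hm', hum', hc]
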